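/- Let Ω = [0,1]×[0,1], ε > 0, let b = (b₁,b₂) : Ω → ℝ² be continuously differentiable, and let f : Ω → ℝ be continuous. Suppose φ₁, φ₂ : Ω → ℝ are twice continuously differentiable and for i = 1, 2: −(b·∇)(∇·(bφᵢ)) + ε·φᵢ = f on Ω, and (b·ν)∇·(bφᵢ) = 0 on ∂Ω (i.e. b₁·∇·(bφᵢ) = 0 on the faces x = 0, 1 and b₂·∇·(bφᵢ) = 0 on the faces y = 0, 1). Then φ₁ = φ₂ on Ω. -/

import Mathlib

open Set MeasureTheory

lemma auxB (h : ℝ → ℝ) (hc : Continuous h) (hnn : ∀ t, 0 ≤ h t)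
    (hz : ∫ t in (0:ℝ)..1, h t = 0) : ∀ t0 ∈ Icc (0:ℝ) 1, h t0 = 0 := by
  intro t0 ht0
  by_contra hne
  have hpos : 0 < h t0 := lt_of_le_of_ne (hnn t0) (Ne.symm hne)
  obtain ⟨δ, hδ, hball⟩ := Metric.continuousAt_iff.mp hc.continuousAt (h t0 / 2) (by linarith)
  set a := max 0 (t0 - δ/2) with ha
  set b := min 1 (t0 + δ/2) with hb
  have hat0 : a ≤ t0 := max_le ht0.1 (by linarith)
  have hbt0 : t0 ≤ b := le_min ht0.2 (by linarith)
  have hab : a < b := by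
    rcases lt_or_eq_of_le ht0.2 with h1 | h1
    · exact lt_of_le_of_lt hat0 (lt_min h1 (by linarith))
    · exact lt_of_lt_of_le (max_lt zero_lt_one (by rw [h1]; linarith)) (h1 ▸ hbt0)
  have hmono : ∀ t ∈ Set.Ioo a b, h t0 / 2 < h t := by
    intro t ht
    have h1 : t0 - δ/2 < t := lt_of_le_of_lt (le_max_right _ _) ht.1
    have h2 : t < t0 + δ/2 := lt_of_lt_of_le ht.2 (min_le_right _ _)
    have : dist t t0 < δ := by rw [Real.dist_eq]; rw [abs_lt]; constructor <;> linarith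
    have := hball this
    rw [Real.dist_eq, abs_lt] at this
    linarith [this.1]
  have hint : IntervalIntegrable h volume a b := hc.intervalIntegrable _ _
  have hpos2 : 0 < ∫ t in a..b, h t :=
    intervalIntegral.intervalIntegral_pos_of_pos_on hint (fun t ht => lt_trans (by linarith) (hmono t ht)) hab
  have hle : (∫ t in a..b, h t) ≤ ∫ t in (0:ℝ)..1, h t := by
    apply intervalIntegral.integral_mono_interval (le_max_left _ _) hab.le (min_le_left _ _)
    · filter_upwards with t using hnn t
    · exact hc.intervalIntegrable _ _
  linarith [hz ▸ hle]

lemma auxC (P P' : ℝ → ℝ)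
    (hP' : ∀ x ∈ Icc (0:ℝ) 1, HasDerivWithinAt P (P' x) (Icc (0:ℝ) 1) x)
    (hcP' : ContinuousOn P' (Icc (0:ℝ) 1))
    (h0 : P 0 = 0) (h1 : P 1 = 0) : ∫ x in (0:ℝ)..1, P' x = 0 := by
  have hFTC : ∫ x in (0:ℝ)..1, P' x = P 1 - P 0 := by
    apply intervalIntegral.integral_eq_sub_of_hasDeriv_right_of_le zero_le_one
    · exact fun x hx => (hP' x hx).continuousWithinAt
    · intro x hx
      exact ((hP' x (Ioo_subset_Icc_self hx)).hasDerivAt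
        (Icc_mem_nhds hx.1 hx.2)).hasDerivWithinAt
    · exact hcP'.intervalIntegrable_of_Icc zero_le_one
  rw [hFTC, h0, h1, sub_zero]

/-- clamp to [0,1] -/
noncomputable def clmp (t : ℝ) : ℝ := max 0 (min 1 t)

lemma clmp_mem (t : ℝ) : clmp t ∈ Icc (0:ℝ) 1 :=
  ⟨le_max_left _ _, max_le zero_le_one (min_le_left _ _)⟩

lemma clmp_eq {t : ℝ} (ht : t ∈ Icc (0:ℝ) 1) : clmp t = t := by
  simp only [clmp, min_eq_right ht.2, max_eq_right ht.1]

lemma clmp_cont : Continuous clmp := continuous_const.max (continuous_const.min continuous_id)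

lemma auxA (g : ℝ → ℝ → ℝ) (hnn : ∀ x y, 0 ≤ g x y)
    (hc : ContinuousOn (fun p : ℝ × ℝ => g p.1 p.2) (Icc (0:ℝ) 1 ×ˢ Icc (0:ℝ) 1))
    (hI : ∫ y in (0:ℝ)..1, ∫ x in (0:ℝ)..1, g x y = 0) :
    ∀ x0 ∈ Icc (0:ℝ) 1, ∀ y0 ∈ Icc (0:ℝ) 1, g x0 y0 = 0 := by
  intro x0 hx0 y0 hy0
  set g' : ℝ → ℝ → ℝ := fun x y => g (clmp x) (clmp y) with hg'
  have hg'c : Continuous (fun p : ℝ × ℝ => g' p.1 p.2) := by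
    have : (fun p : ℝ × ℝ => g' p.1 p.2)
        = (fun p : ℝ × ℝ => g p.1 p.2) ∘ (fun p : ℝ × ℝ => (clmp p.1, clmp p.2)) := rfl
    rw [this, ← continuousOn_univ]
    apply hc.comp ((clmp_cont.comp continuous_fst).prodMk (clmp_cont.comp continuous_snd)).continuousOn
    intro p _
    exact ⟨clmp_mem _, clmp_mem _⟩
  set G : ℝ → ℝ := fun y => ∫ x in (0:ℝ)..1, g' x y with hG
  have hGc : Continuous G := by
    apply intervalIntegral.continuous_parametric_intervalIntegral_of_continuous'
    exact hg'c.comp (continuous_swap)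
  have hGnn : ∀ y, 0 ≤ G y := fun y =>
    intervalIntegral.integral_nonneg zero_le_one (fun x _ => hnn _ _)
  have hGI : ∫ y in (0:ℝ)..1, G y = 0 := by
    have heq : EqOn G (fun y => ∫ x in (0:ℝ)..1, g x y) (uIcc (0:ℝ) 1) := by
      intro y hy
      rw [uIcc_of_le zero_le_one] at hy
      apply intervalIntegral.integral_congr
      intro x hx
      rw [uIcc_of_le zero_le_one] at hx
      simp only [hg', clmp_eq hx, clmp_eq hy]
    rw [intervalIntegral.integral_congr heq, hI]
  have hG0 : G y0 = 0 := auxB G hGc hGnn hGI y0 hy0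
  have : g' x0 y0 = 0 := by
    apply auxB (fun x => g' x y0) _ (fun x => hnn _ _) hG0 x0 hx0
    exact hg'c.comp (continuous_id.prodMk continuous_const)
  simpa only [hg', clmp_eq hx0, clmp_eq hy0] using this


lemma auxSwap (q : ℝ → ℝ → ℝ)
    (hc : ContinuousOn (fun p : ℝ × ℝ => q p.1 p.2) (Icc (0:ℝ) 1 ×ˢ Icc (0:ℝ) 1)) :
    ∫ y in (0:ℝ)..1, ∫ x in (0:ℝ)..1, q x y = ∫ x in (0:ℝ)..1, ∫ y in (0:ℝ)..1, q x y := by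
  have hint : Integrable (Function.uncurry q)
      ((volume.restrict (Ioc (0:ℝ) 1)).prod (volume.restrict (Ioc (0:ℝ) 1))) := by
    rw [Measure.prod_restrict, ← Measure.volume_eq_prod]
    apply IntegrableOn.mono_set _ (prod_mono Ioc_subset_Icc_self Ioc_subset_Icc_self)
    exact hc.integrableOn_compact (isCompact_Icc.prod isCompact_Icc)
  simp only [intervalIntegral.integral_of_le zero_le_one]
  exact (MeasureTheory.integral_integral_swap hint).symm

theorem statement12 (ε : ℝ) (hε : 0 < ε)
    (b1 b2 b1x b1y b2x b2y f : ℝ → ℝ → ℝ)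
    (phi1 phi1X phi1Y w1 w1X w1Y phi2 phi2X phi2Y w2 w2X w2Y : ℝ → ℝ → ℝ)
    (hb1x : ∀ x ∈ Icc (0:ℝ) 1, ∀ y ∈ Icc (0:ℝ) 1,
      HasDerivWithinAt (fun t => b1 t y) (b1x x y) (Icc (0:ℝ) 1) x)
    (hb1y : ∀ x ∈ Icc (0:ℝ) 1, ∀ y ∈ Icc (0:ℝ) 1,
      HasDerivWithinAt (fun t => b1 x t) (b1y x y) (Icc (0:ℝ) 1) y)
    (hb2x : ∀ x ∈ Icc (0:ℝ) 1, ∀ y ∈ Icc (0:ℝ) 1,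
      HasDerivWithinAt (fun t => b2 t y) (b2x x y) (Icc (0:ℝ) 1) x)
    (hb2y : ∀ x ∈ Icc (0:ℝ) 1, ∀ y ∈ Icc (0:ℝ) 1,
      HasDerivWithinAt (fun t => b2 x t) (b2y x y) (Icc (0:ℝ) 1) y)
    (hphi1X : ∀ x ∈ Icc (0:ℝ) 1, ∀ y ∈ Icc (0:ℝ) 1,
      HasDerivWithinAt (fun t => phi1 t y) (phi1X x y) (Icc (0:ℝ) 1) x)
    (hphi1Y : ∀ x ∈ Icc (0:ℝ) 1, ∀ y ∈ Icc (0:ℝ) 1,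
      HasDerivWithinAt (fun t => phi1 x t) (phi1Y x y) (Icc (0:ℝ) 1) y)
    (hw1 : ∀ x ∈ Icc (0:ℝ) 1, ∀ y ∈ Icc (0:ℝ) 1,
      w1 x y = b1x x y * phi1 x y + b1 x y * phi1X x y
        + b2y x y * phi1 x y + b2 x y * phi1Y x y)
    (hw1X : ∀ x ∈ Icc (0:ℝ) 1, ∀ y ∈ Icc (0:ℝ) 1,
      HasDerivWithinAt (fun t => w1 t y) (w1X x y) (Icc (0:ℝ) 1) x)
    (hw1Y : ∀ x ∈ Icc (0:ℝ) 1, ∀ y ∈ Icc (0:ℝ) 1,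
      HasDerivWithinAt (fun t => w1 x t) (w1Y x y) (Icc (0:ℝ) 1) y)
    (hphi2X : ∀ x ∈ Icc (0:ℝ) 1, ∀ y ∈ Icc (0:ℝ) 1,
      HasDerivWithinAt (fun t => phi2 t y) (phi2X x y) (Icc (0:ℝ) 1) x)
    (hphi2Y : ∀ x ∈ Icc (0:ℝ) 1, ∀ y ∈ Icc (0:ℝ) 1,
      HasDerivWithinAt (fun t => phi2 x t) (phi2Y x y) (Icc (0:ℝ) 1) y)
    (hw2 : ∀ x ∈ Icc (0:ℝ) 1, ∀ y ∈ Icc (0:ℝ) 1,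
      w2 x y = b1x x y * phi2 x y + b1 x y * phi2X x y
        + b2y x y * phi2 x y + b2 x y * phi2Y x y)
    (hw2X : ∀ x ∈ Icc (0:ℝ) 1, ∀ y ∈ Icc (0:ℝ) 1,
      HasDerivWithinAt (fun t => w2 t y) (w2X x y) (Icc (0:ℝ) 1) x)
    (hw2Y : ∀ x ∈ Icc (0:ℝ) 1, ∀ y ∈ Icc (0:ℝ) 1,
      HasDerivWithinAt (fun t => w2 x t) (w2Y x y) (Icc (0:ℝ) 1) y)
    (hcont : ∀ F ∈ ({b1, b2, b1x, b1y, b2x, b2y, f, phi1, phi1X, phi1Y, w1, w1X, w1Y,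
        phi2, phi2X, phi2Y, w2, w2X, w2Y} : Set (ℝ → ℝ → ℝ)),
      ContinuousOn (fun pt : ℝ × ℝ => F pt.1 pt.2) (Icc (0:ℝ) 1 ×ˢ Icc (0:ℝ) 1))
    (hpde1 : ∀ x ∈ Icc (0:ℝ) 1, ∀ y ∈ Icc (0:ℝ) 1,
      -(b1 x y * w1X x y + b2 x y * w1Y x y) + ε * phi1 x y = f x y)
    (hpde2 : ∀ x ∈ Icc (0:ℝ) 1, ∀ y ∈ Icc (0:ℝ) 1,
      -(b1 x y * w2X x y + b2 x y * w2Y x y) + ε * phi2 x y = f x y)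
    (hbd1x : ∀ y ∈ Icc (0:ℝ) 1, b1 0 y * w1 0 y = 0 ∧ b1 1 y * w1 1 y = 0)
    (hbd1y : ∀ x ∈ Icc (0:ℝ) 1, b2 x 0 * w1 x 0 = 0 ∧ b2 x 1 * w1 x 1 = 0)
    (hbd2x : ∀ y ∈ Icc (0:ℝ) 1, b1 0 y * w2 0 y = 0 ∧ b1 1 y * w2 1 y = 0)
    (hbd2y : ∀ x ∈ Icc (0:ℝ) 1, b2 x 0 * w2 x 0 = 0 ∧ b2 x 1 * w2 x 1 = 0) :
    ∀ x ∈ Icc (0:ℝ) 1, ∀ y ∈ Icc (0:ℝ) 1, phi1 x y = phi2 x y := by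
  -- continuity of each given function on the square
  have cb1 := hcont b1 (by simp)
  have cb2 := hcont b2 (by simp)
  have cb1x := hcont b1x (by simp)
  have cb2y := hcont b2y (by simp)
  have cphi1 := hcont phi1 (by simp)
  have cphi1X := hcont phi1X (by simp)
  have cphi1Y := hcont phi1Y (by simp)
  have cw1 := hcont w1 (by simp)
  have cw1X := hcont w1X (by simp)
  have cw1Y := hcont w1Y (by simp)
  have cphi2 := hcont phi2 (by simp)
  have cphi2X := hcont phi2X (by simp)
  have cphi2Y := hcont phi2Y (by simp)
  have cw2 := hcont w2 (by simp)
  have cw2X := hcont w2X (by simp)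
  have cw2Y := hcont w2Y (by simp)
  -- slicing helpers
  have sliceX : ∀ (F : ℝ → ℝ → ℝ),
      ContinuousOn (fun p : ℝ × ℝ => F p.1 p.2) (Icc (0:ℝ) 1 ×ˢ Icc (0:ℝ) 1) →
      ∀ y ∈ Icc (0:ℝ) 1, ContinuousOn (fun x => F x y) (Icc (0:ℝ) 1) := by
    intro F hF y hy
    exact hF.comp (continuous_id.prodMk continuous_const).continuousOn
      (fun x hx => ⟨hx, hy⟩)
  have sliceY : ∀ (F : ℝ → ℝ → ℝ),
      ContinuousOn (fun p : ℝ × ℝ => F p.1 p.2) (Icc (0:ℝ) 1 ×ˢ Icc (0:ℝ) 1) →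
      ∀ x ∈ Icc (0:ℝ) 1, ContinuousOn (fun y => F x y) (Icc (0:ℝ) 1) := by
    intro F hF x hx
    exact hF.comp (continuous_const.prodMk continuous_id).continuousOn
      (fun y hy => ⟨hx, hy⟩)
  -- the integrands
  set gP : ℝ → ℝ → ℝ := fun x y =>
    (b1x x y * (w1 x y - w2 x y) + b1 x y * (w1X x y - w2X x y)) * (phi1 x y - phi2 x y)
      + b1 x y * (w1 x y - w2 x y) * (phi1X x y - phi2X x y) with hgPdef
  set gQ : ℝ → ℝ → ℝ := fun x y =>
    (b2y x y * (w1 x y - w2 x y) + b2 x y * (w1Y x y - w2Y x y)) * (phi1 x y - phi2 x y)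
      + b2 x y * (w1 x y - w2 x y) * (phi1Y x y - phi2Y x y) with hgQdef
  set g : ℝ → ℝ → ℝ := fun x y =>
    ε * (phi1 x y - phi2 x y) ^ 2 + (w1 x y - w2 x y) ^ 2 with hgdef
  -- 2D continuity of the integrands
  have hcgP : ContinuousOn (fun p : ℝ × ℝ => gP p.1 p.2) (Icc (0:ℝ) 1 ×ˢ Icc (0:ℝ) 1) :=
    (((cb1x.mul (cw1.sub cw2)).add (cb1.mul (cw1X.sub cw2X))).mul
      (cphi1.sub cphi2)).add ((cb1.mul (cw1.sub cw2)).mul (cphi1X.sub cphi2X))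
  have hcgQ : ContinuousOn (fun p : ℝ × ℝ => gQ p.1 p.2) (Icc (0:ℝ) 1 ×ˢ Icc (0:ℝ) 1) :=
    (((cb2y.mul (cw1.sub cw2)).add (cb2.mul (cw1Y.sub cw2Y))).mul
      (cphi1.sub cphi2)).add ((cb2.mul (cw1.sub cw2)).mul (cphi1Y.sub cphi2Y))
  have hcg : ContinuousOn (fun p : ℝ × ℝ => g p.1 p.2) (Icc (0:ℝ) 1 ×ˢ Icc (0:ℝ) 1) :=
    ((continuousOn_const.mul ((cphi1.sub cphi2).pow 2)).add ((cw1.sub cw2).pow 2))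
  -- pointwise algebraic identity on the square
  have galg : ∀ x ∈ Icc (0:ℝ) 1, ∀ y ∈ Icc (0:ℝ) 1, g x y = gP x y + gQ x y := by
    intro x hx y hy
    have hA : b1 x y * (w1X x y - w2X x y) + b2 x y * (w1Y x y - w2Y x y)
        = ε * (phi1 x y - phi2 x y) := by
      have h1 := hpde1 x hx y hy
      have h2 := hpde2 x hx y hy
      ring_nf
      ring_nf at h1 h2
      linarith
    have hB : w1 x y - w2 x y
        = b1x x y * (phi1 x y - phi2 x y) + b1 x y * (phi1X x y - phi2X x y)
          + b2y x y * (phi1 x y - phi2 x y) + b2 x y * (phi1Y x y - phi2Y x y) := by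
      have h1 := hw1 x hx y hy
      have h2 := hw2 x hx y hy
      rw [h1, h2]; ring
    simp only [hgdef, hgPdef, hgQdef]
    linear_combination -(phi1 x y - phi2 x y) * hA + (w1 x y - w2 x y) * hB
  -- FTC in x : ∫ gP(·,y) = 0
  have hintX : ∀ y ∈ Icc (0:ℝ) 1, ∫ x in (0:ℝ)..1, gP x y = 0 := by
    intro y hy
    apply auxC (fun x => b1 x y * (w1 x y - w2 x y) * (phi1 x y - phi2 x y))
      (fun x => gP x y)
    · intro x hx
      exact (((hb1x x hx y hy).mul ((hw1X x hx y hy).sub (hw2X x hx y hy))).mul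
        ((hphi1X x hx y hy).sub (hphi2X x hx y hy)))
    · exact sliceX gP hcgP y hy
    · have h1 := (hbd1x y hy).1
      have h2 := (hbd2x y hy).1
      have : b1 0 y * (w1 0 y - w2 0 y) = 0 := by rw [mul_sub, h1, h2, sub_zero]
      rw [this, zero_mul]
    · have h1 := (hbd1x y hy).2
      have h2 := (hbd2x y hy).2
      have : b1 1 y * (w1 1 y - w2 1 y) = 0 := by rw [mul_sub, h1, h2, sub_zero]
      rw [this, zero_mul]
  -- FTC in y : ∫ gQ(x,·) = 0
  have hintY : ∀ x ∈ Icc (0:ℝ) 1, ∫ y in (0:ℝ)..1, gQ x y = 0 := by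
    intro x hx
    apply auxC (fun y => b2 x y * (w1 x y - w2 x y) * (phi1 x y - phi2 x y))
      (fun y => gQ x y)
    · intro y hy
      exact (((hb2y x hx y hy).mul ((hw1Y x hx y hy).sub (hw2Y x hx y hy))).mul
        ((hphi1Y x hx y hy).sub (hphi2Y x hx y hy)))
    · exact sliceY gQ hcgQ x hx
    · have h1 := (hbd1y x hx).1
      have h2 := (hbd2y x hx).1
      have : b2 x 0 * (w1 x 0 - w2 x 0) = 0 := by rw [mul_sub, h1, h2, sub_zero]
      rw [this, zero_mul]
    · have h1 := (hbd1y x hx).2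
      have h2 := (hbd2y x hx).2
      have : b2 x 1 * (w1 x 1 - w2 x 1) = 0 := by rw [mul_sub, h1, h2, sub_zero]
      rw [this, zero_mul]
  -- the double integral of g is zero
  have hI : ∫ y in (0:ℝ)..1, ∫ x in (0:ℝ)..1, g x y = 0 := by
    have step1 : EqOn (fun y => ∫ x in (0:ℝ)..1, g x y)
        (fun y => ∫ x in (0:ℝ)..1, gQ x y) (uIcc (0:ℝ) 1) := by
      intro y hy
      rw [uIcc_of_le zero_le_one] at hy
      have heq : EqOn (fun x => g x y) (fun x => gP x y + gQ x y) (uIcc (0:ℝ) 1) := by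
        intro x hx
        rw [uIcc_of_le zero_le_one] at hx
        exact galg x hx y hy
      simp only
      rw [intervalIntegral.integral_congr heq,
        intervalIntegral.integral_add
          ((sliceX gP hcgP y hy).intervalIntegrable_of_Icc zero_le_one)
          ((sliceX gQ hcgQ y hy).intervalIntegrable_of_Icc zero_le_one),
        hintX y hy, zero_add]
    rw [intervalIntegral.integral_congr step1, auxSwap gQ hcgQ]
    have step2 : EqOn (fun x => ∫ y in (0:ℝ)..1, gQ x y)
        (fun _ => (0:ℝ)) (uIcc (0:ℝ) 1) := by
      intro x hx
      rw [uIcc_of_le zero_le_one] at hx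
      exact hintY x hx
    rw [intervalIntegral.integral_congr step2]
    simp
  -- conclude pointwise
  intro x hx y hy
  have hnn : ∀ x y : ℝ, 0 ≤ g x y := by
    intro x y
    simp only [hgdef]
    positivity
  have h0 := auxA g hnn hcg hI x hx y hy
  simp only [hgdef] at h0
  have hd2 : (phi1 x y - phi2 x y) ^ 2 = 0 := by
    nlinarith [sq_nonneg (w1 x y - w2 x y), sq_nonneg (phi1 x y - phi2 x y)]
  have := pow_eq_zero_iff (two_ne_zero) |>.mp hd2
  linarith [this]
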